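/- Let S = {0 = s₀ < s₁ < … < s_n} be a compact distance set whose partition into blocks is {0} ∪ B₁ ∪ … ∪ B_k with k ≥ 2, let S⁺ = S∖B₁, and let L be a finite S⁺-metric space. Then the class of finite S-metric spaces spanned by L has the amalgamation property: for all finite S-metric spaces M, M', M'' spanned by L and all isometric embeddings f : M → M' and g : M → M'', there exist a finite S-metric space N spanned by L and isometric embeddings f' : M' → N and g' : M'' → N with f' ∘ f = g' ∘ g. -/

import Mathlib

/-- `s` is a jump number of the finite set `S = {0 = s₀ < s₁ < … < s_n}`. -/
def JumpNumber (S : Finset ℝ) (s : ℝ) : Prop :=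
  s ∈ S ∧ ∀ t ∈ S, s < t → 2 * s < t

/-- `x ≈ y`: `x` and `y` lie in the same block of `S`. -/
def SameBlock (S : Finset ℝ) (x y : ℝ) : Prop :=
  x ∈ S ∧ y ∈ S ∧
    ((x = 0 ∧ y = 0) ∨
      (x ≠ 0 ∧ y ≠ 0 ∧ ∀ j, JumpNumber S j → ¬ (min x y ≤ j ∧ j < max x y)))

/-- `S` is a compact distance set: for nonzero `x, y ∈ S`,
`|x − y| ≤ s₁` iff `x ≈ y`. -/
def CompactDistanceSet (S : Finset ℝ) (s1 : ℝ) : Prop :=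
  ∀ x ∈ S, ∀ y ∈ S, x ≠ 0 → y ≠ 0 → (|x - y| ≤ s1 ↔ SameBlock S x y)

/-- `d ∈ {0} ∪ B₁`, where `B₁` is the first nontrivial block of `S`. -/
def InLowBlock (S : Finset ℝ) (s1 d : ℝ) : Prop :=
  d = 0 ∨ SameBlock S d s1

/-- The `S⁺`-metric space `L` spans the `S`-metric space `M` (`L ≲ M`):
there is an isometric copy of `L` in `M` forming a transversal of the
partition of `M` into `∼`-classes, where `x ∼ y` iff `d(x,y) ∈ {0} ∪ B₁`;
i.e. every point of `M` is `∼`-equivalent to exactly one point of the copy. -/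
def Spans (S : Finset ℝ) (s1 : ℝ) (L : Type) [MetricSpace L]
    (M : Type) [MetricSpace M] : Prop :=
  ∃ τ : L → M, Isometry τ ∧
    ∀ m : M, ∃! a : L, InLowBlock S s1 (dist m (τ a))


namespace Am18

/-- Bundled standing hypotheses on the distance set. -/
structure Good (S : Finset ℝ) (s1 : ℝ) : Prop where
  h0 : (0 : ℝ) ∈ S
  hnn : ∀ s ∈ S, 0 ≤ s
  hs1S : s1 ∈ S
  hs1pos : 0 < s1
  hs1min : ∀ s ∈ S, s ≠ 0 → s1 ≤ s
  hcds : CompactDistanceSet S s1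

variable {S : Finset ℝ} {s1 : ℝ}

lemma sb_memL {x y : ℝ} (h : SameBlock S x y) : x ∈ S := h.1
lemma sb_memR {x y : ℝ} (h : SameBlock S x y) : y ∈ S := h.2.1

lemma sb_symm {x y : ℝ} (h : SameBlock S x y) : SameBlock S y x := by
  obtain ⟨hx, hy, h0 | ⟨hx0, hy0, hj⟩⟩ := h
  · exact ⟨hy, hx, Or.inl ⟨h0.2, h0.1⟩⟩
  · refine ⟨hy, hx, Or.inr ⟨hy0, hx0, fun j hj' hc => hj j hj' ?_⟩⟩
    rwa [min_comm, max_comm]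

lemma sb_refl {x : ℝ} (hx : x ∈ S) (hx0 : x ≠ 0) : SameBlock S x x := by
  refine ⟨hx, hx, Or.inr ⟨hx0, hx0, fun j _ hc => ?_⟩⟩
  simp only [min_self, max_self] at hc
  exact absurd (lt_of_le_of_lt hc.1 hc.2) (lt_irrefl _)

lemma sb_trans {x y z : ℝ} (h1 : SameBlock S x y) (h2 : SameBlock S y z) :
    SameBlock S x z := by
  obtain ⟨hx, hy, c1⟩ := h1
  obtain ⟨_, hz, c2⟩ := h2
  rcases c1 with ⟨hx0, hy0⟩ | ⟨hx0, hy0, hj1⟩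
  · rcases c2 with ⟨_, hz0⟩ | ⟨hy0', _, _⟩
    · exact ⟨hx, hz, Or.inl ⟨hx0, hz0⟩⟩
    · exact absurd hy0 hy0'
  · rcases c2 with ⟨hy0', _⟩ | ⟨_, hz0, hj2⟩
    · exact absurd hy0' hy0
    · refine ⟨hx, hz, Or.inr ⟨hx0, hz0, fun j hjmp hc => ?_⟩⟩
      obtain ⟨hc1, hc2⟩ := hc
      rcases lt_or_ge j y with hy' | hy'
      · rcases le_or_gt (min x y) j with hm | hm
        · exact hj1 j hjmp ⟨hm, lt_of_lt_of_le hy' (le_max_right x y)⟩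
        · -- min x y > j, so x > j and y > j; since min x z ≤ j, z ≤ j
          have hxj : j < x := lt_of_lt_of_le hm (min_le_left x y)
          have hzj : z ≤ j := by
            rcases min_le_iff.1 hc1 with h | h
            · exact absurd h (not_le.2 hxj)
            · exact h
          exact hj2 j hjmp ⟨le_trans (min_le_right y z) hzj,
            lt_of_lt_of_le hy' (le_max_left y z)⟩
      · rcases lt_max_iff.1 hc2 with h | h
        · exact hj1 j hjmp ⟨le_trans (min_le_right x y) hy', lt_of_lt_of_le h (le_max_left x y)⟩
        · exact hj2 j hjmp ⟨le_trans (min_le_left y z) hy', lt_of_lt_of_le h (le_max_right y z)⟩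

lemma sb_ne_zero {x y : ℝ} (h : SameBlock S x y) (hx : x ≠ 0) : y ≠ 0 := by
  rcases h.2.2 with ⟨h1, _⟩ | ⟨_, h2, _⟩
  · exact absurd h1 hx
  · exact h2

lemma Good.sb_le (hG : Good S s1) {x y : ℝ} (h : SameBlock S x y) : |x - y| ≤ s1 := by
  obtain ⟨hx, hy, c⟩ := h
  rcases c with ⟨hx0, hy0⟩ | ⟨hx0, hy0, _⟩
  · simp [hx0, hy0]; exact le_of_lt hG.hs1pos
  · exact (hG.hcds x hx y hy hx0 hy0).2 ⟨hx, hy, Or.inr ⟨hx0, hy0, ‹_›⟩⟩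

lemma Good.notsb_gt (hG : Good S s1) {x y : ℝ} (hx : x ∈ S) (hy : y ∈ S)
    (hx0 : x ≠ 0) (hy0 : y ≠ 0) (h : ¬ SameBlock S x y) : min x y < |x - y| := by
  have hex : ∃ j, JumpNumber S j ∧ min x y ≤ j ∧ j < max x y := by
    by_contra hc
    push_neg at hc
    exact h ⟨hx, hy, Or.inr ⟨hx0, hy0, fun j hj hand => (hc j hj hand.1).not_gt hand.2⟩⟩
  obtain ⟨j, hjmp, hj1, hj2⟩ := hex
  have hmax : max x y ∈ S := by
    rcases max_choice x y with h' | h' <;> rw [h'] <;> assumption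
  have h2j : 2 * j < max x y := hjmp.2 _ hmax hj2
  have habs : |x - y| = max x y - min x y := by
    rcases le_total x y with h' | h'
    · rw [abs_sub_comm, abs_of_nonneg (by linarith), max_eq_right h', min_eq_left h']
    · rw [abs_of_nonneg (by linarith), max_eq_left h', min_eq_right h']
  rw [habs]; linarith

open Classical in
/-- the largest element of the first block `B₁`. -/
noncomputable def jone (S : Finset ℝ) (s1 : ℝ) : ℝ :=
  WithBot.unbotD s1 ((S.filter (fun d => SameBlock S d s1)).max)

section jone
variable (hG : Good S s1)
include hG

lemma jone_spec : jone S s1 ∈ S ∧ SameBlock S (jone S s1) s1 := by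
  classical
  have hne : (S.filter (fun d => SameBlock S d s1)).Nonempty :=
    ⟨s1, Finset.mem_filter.2 ⟨hG.hs1S, sb_refl hG.hs1S (ne_of_gt hG.hs1pos)⟩⟩
  have h := Finset.max'_mem _ hne
  have heq : jone S s1 = (S.filter (fun d => SameBlock S d s1)).max' hne := by
    unfold jone
    rw [← Finset.coe_max' hne]
    rfl
  rw [heq]
  exact ⟨(Finset.mem_filter.1 h).1, (Finset.mem_filter.1 h).2⟩

lemma jone_ge {d : ℝ} (hd : d ∈ S) (hsb : SameBlock S d s1) : d ≤ jone S s1 := by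
  classical
  have hne : (S.filter (fun d => SameBlock S d s1)).Nonempty :=
    ⟨s1, Finset.mem_filter.2 ⟨hG.hs1S, sb_refl hG.hs1S (ne_of_gt hG.hs1pos)⟩⟩
  have heq : jone S s1 = (S.filter (fun d => SameBlock S d s1)).max' hne := by
    unfold jone
    rw [← Finset.coe_max' hne]
    rfl
  rw [heq]
  refine Finset.le_max' _ d (Finset.mem_filter.2 ?_)
  exact ⟨hd, hsb⟩

lemma s1_le_jone : s1 ≤ jone S s1 :=
  jone_ge hG hG.hs1S (sb_refl hG.hs1S (ne_of_gt hG.hs1pos))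

lemma jone_le_two : jone S s1 ≤ 2 * s1 := by
  have := hG.sb_le (jone_spec hG).2
  have := abs_le.1 this
  linarith [this.1, this.2]

lemma jone_pos : 0 < jone S s1 := lt_of_lt_of_le hG.hs1pos (s1_le_jone hG)

/-- no jump number lies in `[s1, jone)`. -/
lemma no_jump_low {j : ℝ} (hj : JumpNumber S j) (h1 : s1 ≤ j) (h2 : j < jone S s1) :
    False := by
  have := hj.2 _ (jone_spec hG).1 h2
  have := jone_le_two hG
  linarith

/-- K1: small members of `S` are in the low block. -/
lemma lowOfLe {d : ℝ} (hd : d ∈ S) (h2 : d ≤ 2 * jone S s1) : InLowBlock S s1 d := by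
  rcases eq_or_ne d 0 with h | h
  · exact Or.inl h
  right
  have hs1d : s1 ≤ d := hG.hs1min d hd h
  refine ⟨hd, hG.hs1S, Or.inr ⟨h, ne_of_gt hG.hs1pos, fun j hj hc => ?_⟩⟩
  obtain ⟨hc1, hc2⟩ := hc
  rw [min_eq_right hs1d] at hc1
  rw [max_eq_left hs1d] at hc2
  rcases lt_or_ge j (jone S s1) with h' | h'
  · exact no_jump_low hG hj hc1 h'
  · have := hj.2 _ hd hc2
    linarith

/-- K2: members of `S` not in the low block exceed `2 * jone`. -/
lemma gt_of_notLow {d : ℝ} (hd : d ∈ S) (h : ¬ InLowBlock S s1 d) : 2 * jone S s1 < d := by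
  by_contra hc
  push_neg at hc
  exact h (lowOfLe hG hd hc)

lemma low_le_jone {d : ℝ} (h : InLowBlock S s1 d) : d ≤ jone S s1 := by
  rcases h with h | h
  · rw [h]; exact le_of_lt (jone_pos hG)
  · exact jone_ge hG (sb_memL h) h

lemma low_nonneg {d : ℝ} (h : InLowBlock S s1 d) : 0 ≤ d := by
  rcases h with h | h
  · rw [h]
  · exact hG.hnn d (sb_memL h)

lemma low_mem {d : ℝ} (h : InLowBlock S s1 d) : d ∈ S := by
  rcases h with h | h
  · rw [h]; exact hG.h0
  · exact sb_memL h

end jone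

open Classical in
/-- round down to `S`. -/
noncomputable def flS (S : Finset ℝ) (θ : ℝ) : ℝ := WithBot.unbotD 0 ((S.filter (· ≤ θ)).max)

section flS
variable (hG : Good S s1)
include hG

lemma flS_spec {θ : ℝ} (hθ : 0 ≤ θ) : flS S θ ∈ S ∧ flS S θ ≤ θ := by
  classical
  have hne : (S.filter (· ≤ θ)).Nonempty := ⟨0, Finset.mem_filter.2 ⟨hG.h0, hθ⟩⟩
  have heq : flS S θ = (S.filter (· ≤ θ)).max' hne := by
    unfold flS
    rw [← Finset.coe_max' hne]
    rfl
  rw [heq]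
  have h := Finset.max'_mem _ hne
  exact ⟨(Finset.mem_filter.1 h).1, (Finset.mem_filter.1 h).2⟩

lemma flS_ge {θ s : ℝ} (hθ : 0 ≤ θ) (hs : s ∈ S) (h : s ≤ θ) : s ≤ flS S θ := by
  classical
  have hne : (S.filter (· ≤ θ)).Nonempty := ⟨0, Finset.mem_filter.2 ⟨hG.h0, hθ⟩⟩
  have heq : flS S θ = (S.filter (· ≤ θ)).max' hne := by
    unfold flS
    rw [← Finset.coe_max' hne]
    rfl
  rw [heq]
  refine Finset.le_max' _ s (Finset.mem_filter.2 ?_)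
  exact ⟨hs, h⟩

end flS

/-- The key block-arithmetic lemma ("Lemma Z"). -/
lemma Good.Z (hG : Good S s1) {D D' e e' q r : ℝ}
    (hDe : SameBlock S D e) (hD'e' : SameBlock S D' e') (hrq : SameBlock S r q)
    (he : 2 * jone S s1 < e) (he' : 2 * jone S s1 < e')
    (htri : e' ≤ e + q) (hD : s1 ≤ D) (hr : s1 ≤ r) : D' ≤ D + r := by
  have hj1 := s1_le_jone hG
  have hs1 := hG.hs1pos
  -- basic bounds from same-block
  have hDeabs := abs_le.1 (hG.sb_le hDe)
  have hD'e'abs := abs_le.1 (hG.sb_le hD'e')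
  have hrqabs := abs_le.1 (hG.sb_le hrq)
  have hD'pos : 0 < D' := by linarith [hD'e'abs.1]
  have hq0 : q ≠ 0 := sb_ne_zero hrq (by intro h; rw [h] at hr; linarith)
  have he'0 : e' ≠ 0 := by intro h; rw [h] at he'; linarith
  have he0 : e ≠ 0 := by intro h; rw [h] at he; linarith
  by_contra hcon
  push_neg at hcon
  -- step 1
  have h1 : ¬ SameBlock S D D' := by
    intro h
    have := abs_le.1 (hG.sb_le h)
    linarith [this.1]
  -- step 2 : D' > 2 D
  have h2 : 2 * D < D' := by
    have := hG.notsb_gt (sb_memL hDe) (sb_memL hD'e')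
      (ne_of_gt (lt_of_lt_of_le hs1 hD)) (ne_of_gt hD'pos) h1
    have hDD' : D < D' := by linarith
    rw [min_eq_left (le_of_lt hDD'), abs_sub_comm, abs_of_nonneg (by linarith)] at this
    linarith
  -- step 3 : blocks of e, e' differ and e' > 2 e
  have h3 : ¬ SameBlock S e e' := fun h =>
    h1 (sb_trans (sb_trans hDe h) (sb_symm hD'e'))
  have h4 : 2 * e < e' := by
    have hn := hG.notsb_gt (sb_memR hDe) (sb_memR hD'e') he0 he'0 h3
    rcases le_or_gt e' e with hle | hlt
    · exfalso
      rw [min_eq_right hle, abs_of_nonneg (by linarith)] at hn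
      -- e > 2 e', derive contradiction
      nlinarith [hDeabs.2, hD'e'abs.2, hDeabs.1, hD'e'abs.1]
    · rw [min_eq_left (le_of_lt hlt), abs_sub_comm, abs_of_nonneg (by linarith)] at hn
      linarith
  -- step 4 : ¬ SameBlock r D'
  have h5 : ¬ SameBlock S r D' := by
    intro h
    have := abs_le.1 (hG.sb_le h)
    linarith [this.1]
  have h6 : ¬ SameBlock S q e' := fun h =>
    h5 (sb_trans (sb_trans hrq h) (sb_symm hD'e'))
  have h7 := hG.notsb_gt (sb_memR hrq) (sb_memR hD'e') hq0 he'0 h6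
  rcases le_or_gt e' q with hle | hlt
  · -- q ≥ e', so q > 2 e', contradiction with hcon
    rw [min_eq_right hle, abs_of_nonneg (by linarith)] at h7
    -- q > 2 e', r ≥ q - s1 ≥ 2 e' - s1, e' > 2e > 4 j1 ≥ 4 s1, D' ≤ e' + s1
    nlinarith [hrqabs.1, hrqabs.2, hD'e'abs.2, hD'e'abs.1]
  · rw [min_eq_left (le_of_lt hlt), abs_sub_comm, abs_of_nonneg (by linarith)] at h7
    -- e' > 2 q together with e' > 2 e contradicts e' ≤ e + q
    linarith

section metric

variable {X : Type} [MetricSpace X] (hG : Good S s1) (hXS : ∀ x y : X, dist x y ∈ S)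
include hG hXS

lemma rel_trans {x y z : X} (h1 : InLowBlock S s1 (dist x y))
    (h2 : InLowBlock S s1 (dist y z)) : InLowBlock S s1 (dist x z) := by
  refine lowOfLe hG (hXS x z) ?_
  calc dist x z ≤ dist x y + dist y z := dist_triangle x y z
    _ ≤ jone S s1 + jone S s1 := add_le_add (low_le_jone hG h1) (low_le_jone hG h2)
    _ = 2 * jone S s1 := by ring

omit hG hXS in
lemma rel_symm {x y : X} (h : InLowBlock S s1 (dist x y)) :
    InLowBlock S s1 (dist y x) := by rwa [dist_comm]

/-- distances between points of two distinct classes all lie in one block. -/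
lemma sbDist {x x₀ y y₀ : X} (h1 : InLowBlock S s1 (dist x x₀))
    (h2 : InLowBlock S s1 (dist y y₀)) (h3 : ¬ InLowBlock S s1 (dist x₀ y₀)) :
    SameBlock S (dist x y) (dist x₀ y₀) := by
  have he : 2 * jone S s1 < dist x₀ y₀ := gt_of_notLow hG (hXS x₀ y₀) h3
  have hd : ¬ InLowBlock S s1 (dist x y) := by
    intro h
    exact h3 (rel_trans hG hXS (rel_trans hG hXS (rel_symm h1) h)  h2)
  have hdgt : 2 * jone S s1 < dist x y := gt_of_notLow hG (hXS x y) hd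
  have hj1 := jone_pos hG
  by_contra hc
  have hp1 : (0:ℝ) < 2 * jone S s1 := by linarith
  have hn := hG.notsb_gt (hXS x y) (hXS x₀ y₀) (ne_of_gt (lt_trans hp1 hdgt))
    (ne_of_gt (lt_trans hp1 he)) hc
  have habs : |dist x y - dist x₀ y₀| ≤ dist x x₀ + dist y y₀ := by
    have t1 : dist x y ≤ dist x x₀ + dist x₀ y₀ + dist y₀ y := dist_triangle4 x x₀ y₀ y
    have t2 : dist x₀ y₀ ≤ dist x₀ x + dist x y + dist y y₀ := dist_triangle4 x₀ x y y₀
    rw [dist_comm y₀ y] at t1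
    rw [dist_comm x₀ x] at t2
    rw [abs_sub_le_iff]
    exact ⟨by linarith, by linarith⟩
  have hb1 := low_le_jone hG h1
  have hb2 := low_le_jone hG h2
  have hmin : 2 * jone S s1 < min (dist x y) (dist x₀ y₀) := lt_min hdgt he
  have : min (dist x y) (dist x₀ y₀) < |dist x y - dist x₀ y₀| := hn
  linarith

/-- any isometric copy of `L` in a space spanned by `L` is itself a spanning transversal. -/
lemma spanAlign {L : Type} [MetricSpace L] (hLfin : Finite L)
    (hLplus : ∀ a b : L, dist a b = 0 ∨ ¬ SameBlock S (dist a b) s1)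
    (hsp : ∃ τ' : L → X, Isometry τ' ∧
      ∀ m : X, ∃! a : L, InLowBlock S s1 (dist m (τ' a)))
    (κ : L → X) (hκ : Isometry κ) :
    ∀ x : X, ∃! a : L, InLowBlock S s1 (dist x (κ a)) := by
  obtain ⟨τ', _, hτ'⟩ := hsp
  classical
  -- low distance between κ-points forces equality
  have hκlow : ∀ a b : L, InLowBlock S s1 (dist (κ a) (κ b)) → a = b := by
    intro a b h
    rw [hκ.dist_eq] at h
    rcases h with h | h
    · exact dist_eq_zero.1 h
    · rcases hLplus a b with h' | h'
      · exact dist_eq_zero.1 h'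
      · exact absurd h h'
  have σ : ∀ x : X, ∃ c : L, InLowBlock S s1 (dist x (τ' c)) := fun x => (hτ' x).exists
  set h : L → L := fun a => (σ (κ a)).choose with hh
  have hinj : Function.Injective h := by
    intro a b hab
    apply hκlow
    have h1 := (σ (κ a)).choose_spec
    have h2 := (σ (κ b)).choose_spec
    have hab' : (σ (κ a)).choose = (σ (κ b)).choose := hab
    rw [hab'] at h1
    exact rel_trans hG hXS h1 (rel_symm h2)
  have hsurj : Function.Surjective h := (Finite.injective_iff_surjective.1 hinj)
  intro x
  obtain ⟨c, hc⟩ := σ x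
  obtain ⟨a, ha⟩ := hsurj ((hτ' x).exists.choose)
  have hac : InLowBlock S s1 (dist (κ a) (τ' ((hτ' x).exists.choose))) := by
    have := (σ (κ a)).choose_spec
    have ha' : (σ (κ a)).choose = (hτ' x).exists.choose := ha
    rwa [ha'] at this
  have hxlow : InLowBlock S s1 (dist x (κ a)) :=
    rel_trans hG hXS ((hτ' x).exists.choose_spec) (rel_symm hac)
  refine ⟨a, hxlow, fun b hb => ?_⟩
  exact hκlow b a (rel_trans hG hXS (rel_symm hb) hxlow)

end metric

end Am18


open Am18

theorem stmt18 (S : Finset ℝ) (h0 : (0 : ℝ) ∈ S) (hnn : ∀ s ∈ S, 0 ≤ s)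
    (s1 : ℝ) (hs1S : s1 ∈ S) (hs1pos : 0 < s1)
    (hs1min : ∀ s ∈ S, s ≠ 0 → s1 ≤ s)
    (hcds : CompactDistanceSet S s1)
    -- `S` has at least two nontrivial blocks (`k ≥ 2`)
    (htwo : ∃ x ∈ S, x ≠ 0 ∧ ¬ SameBlock S x s1)
    -- `L` is a finite `S⁺`-metric space, `S⁺ = S∖B₁`
    (L : Type) [MetricSpace L] (hLfin : Finite L)
    (hLS : ∀ x y : L, dist x y ∈ S)
    (hLplus : ∀ x y : L, dist x y = 0 ∨ ¬ SameBlock S (dist x y) s1)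
    -- `M`, `M'`, `M''` are finite `S`-metric spaces spanned by `L`
    (M : Type) [MetricSpace M] (hM : Finite M)
    (hMS : ∀ x y : M, dist x y ∈ S) (hMsp : Spans S s1 L M)
    (M' : Type) [MetricSpace M'] (hM' : Finite M')
    (hM'S : ∀ x y : M', dist x y ∈ S) (hM'sp : Spans S s1 L M')
    (M'' : Type) [MetricSpace M''] (hM'' : Finite M'')
    (hM''S : ∀ x y : M'', dist x y ∈ S) (hM''sp : Spans S s1 L M'')
    (f : M → M') (hf : Isometry f) (g : M → M'') (hg : Isometry g) :
    ∃ (N : Type) (_ : MetricSpace N), Finite N ∧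
      (∀ x y : N, dist x y ∈ S) ∧ Spans S s1 L N ∧
      ∃ (f' : M' → N) (g' : M'' → N), Isometry f' ∧ Isometry g' ∧
        ∀ x : M, f' (f x) = g' (g x) := by
  classical
  rcases isEmpty_or_nonempty L with hLe | hLne
  · -- degenerate case : everything is empty
    have hM'e : IsEmpty M' := by
      obtain ⟨τ', _, h⟩ := hM'sp
      exact ⟨fun x => IsEmpty.elim hLe (h x).exists.choose⟩
    have hM''e : IsEmpty M'' := by
      obtain ⟨τ'', _, h⟩ := hM''sp
      exact ⟨fun x => IsEmpty.elim hLe (h x).exists.choose⟩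
    refine ⟨M', inferInstance, hM', hM'S, hM'sp, id, fun y => IsEmpty.elim hM''e y,
      isometry_id, fun y => IsEmpty.elim hM''e y, fun x => IsEmpty.elim hM'e (f x)⟩
  -- main case
  have hGd : Good S s1 := ⟨h0, hnn, hs1S, hs1pos, hs1min, hcds⟩
  obtain ⟨τ, hτ, hτsp⟩ := hMsp
  have hj1s1 : s1 ≤ jone S s1 := s1_le_jone hGd
  have hj1two : jone S s1 ≤ 2 * s1 := jone_le_two hGd
  have spanF : ∀ x : M', ∃! a : L, InLowBlock S s1 (dist x (f (τ a))) :=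
    spanAlign hGd hM'S hLfin hLplus hM'sp (fun a => f (τ a)) (hf.comp hτ)
  have spanG : ∀ y : M'', ∃! a : L, InLowBlock S s1 (dist y (g (τ a))) :=
    spanAlign hGd hM''S hLfin hLplus hM''sp (fun a => g (τ a)) (hg.comp hτ)
  obtain ⟨cl', hcl'⟩ : ∃ cl' : M' → L, ∀ x, InLowBlock S s1 (dist x (f (τ (cl' x)))) ∧
      ∀ a, InLowBlock S s1 (dist x (f (τ a))) → a = cl' x :=
    ⟨fun x => (spanF x).exists.choose, fun x => ⟨(spanF x).exists.choose_spec,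
      fun a ha => (spanF x).unique ha (spanF x).exists.choose_spec⟩⟩
  obtain ⟨cl'', hcl''⟩ : ∃ cl'' : M'' → L, ∀ y, InLowBlock S s1 (dist y (g (τ (cl'' y)))) ∧
      ∀ a, InLowBlock S s1 (dist y (g (τ a))) → a = cl'' y :=
    ⟨fun y => (spanG y).exists.choose, fun y => ⟨(spanG y).exists.choose_spec,
      fun a ha => (spanG y).unique ha (spanG y).exists.choose_spec⟩⟩
  -- distances between skeleton points
  have hfg : ∀ (p q : M), dist (f p) (f q) = dist (g p) (g q) := by
    intro p q; rw [hf.dist_eq, hg.dist_eq]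
  have heLgt : ∀ a b : L, a ≠ b → ¬ InLowBlock S s1 (dist (f (τ a)) (f (τ b))) := by
    intro a b hab hlow
    have hd : dist (f (τ a)) (f (τ b)) = dist a b := (hf.comp hτ).dist_eq a b
    rw [hd] at hlow
    rcases hlow with h | h
    · exact hab (dist_eq_zero.1 h)
    · rcases hLplus a b with h' | h'
      · exact hab (dist_eq_zero.1 h')
      · exact h' h
  have heLgt2 : ∀ a b : L, a ≠ b → 2 * jone S s1 < dist (f (τ a)) (f (τ b)) :=
    fun a b hab => gt_of_notLow hGd (hM'S _ _) (heLgt a b hab)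
  -- class of image points
  have hclfg : ∀ m : M, cl'' (g m) = cl' (f m) := by
    intro m
    refine ((hcl'' (g m)).2 _ ?_).symm
    have h : dist (g m) (g (τ (cl' (f m)))) = dist (f m) (f (τ (cl' (f m)))) :=
      (hfg m (τ (cl' (f m)))).symm
    rw [h]
    exact (hcl' (f m)).1
  -- the cross-distance function
  obtain ⟨E, hEf, hEe⟩ : ∃ E : M' → M'' → ℝ,
      (∀ (m : M) (y : M''), E (f m) y = dist (g m) y) ∧
      (∀ (x : M') (y : M''), (¬ ∃ m, f m = x) → E x y =
        flS S (min (dist x (f (τ (cl' x))) + dist (g (τ (cl' x))) y)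
          (dist y (g (τ (cl'' y))) + dist x (f (τ (cl'' y)))))) := by
    refine ⟨fun x y => if h : ∃ m, f m = x then dist (g h.choose) y
      else flS S (min (dist x (f (τ (cl' x))) + dist (g (τ (cl' x))) y)
          (dist y (g (τ (cl'' y))) + dist x (f (τ (cl'' y))))),
      fun m y => ?_, fun x y hx => dif_neg hx⟩
    show dite _ _ _ = _
    rw [dif_pos (⟨m, rfl⟩ : ∃ m', f m' = f m)]
    have : (⟨m, rfl⟩ : ∃ m', f m' = f m).choose = m :=
      hf.injective (⟨m, rfl⟩ : ∃ m', f m' = f m).choose_spec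
    rw [this]
  -- basic facts about an unforced x : M'
  have hxfacts : ∀ x : M', (¬ ∃ m, f m = x) →
      s1 ≤ dist x (f (τ (cl' x))) ∧ dist x (f (τ (cl' x))) ≤ jone S s1 := by
    intro x hx
    have h0' : dist x (f (τ (cl' x))) ≠ 0 := by
      rw [dist_ne_zero]
      intro h
      exact hx ⟨τ (cl' x), h.symm⟩
    exact ⟨hGd.hs1min _ (hM'S _ _) h0', low_le_jone hGd (hcl' x).1⟩
  have hyfacts : ∀ y : M'', (¬ ∃ m, g m = y) →
      s1 ≤ dist y (g (τ (cl'' y))) ∧ dist y (g (τ (cl'' y))) ≤ jone S s1 := by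
    intro y hy
    have h0' : dist y (g (τ (cl'' y))) ≠ 0 := by
      rw [dist_ne_zero]
      intro h
      exact hy ⟨τ (cl'' y), h.symm⟩
    exact ⟨hGd.hs1min _ (hM''S _ _) h0', low_le_jone hGd (hcl'' y).1⟩
  -- u is not low when classes differ
  have hugt : ∀ (a : L) (y : M''), a ≠ cl'' y → 2 * jone S s1 < dist (g (τ a)) y := by
    intro a y hab
    refine gt_of_notLow hGd (hM''S _ _) (fun hlow => hab ?_)
    exact (hcl'' y).2 a (rel_symm hlow)
  have hvgt : ∀ (x : M') (b : L), cl' x ≠ b → 2 * jone S s1 < dist x (f (τ b)) := by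
    intro x b hab
    refine gt_of_notLow hGd (hM'S _ _) (fun hlow => hab ?_)
    exact ((hcl' x).2 b hlow).symm
  -- u, v lie in the block of the skeleton distance (distinct classes)
  have husb : ∀ (a : L) (y : M''), a ≠ cl'' y →
      SameBlock S (dist (g (τ a)) y) (dist (f (τ a)) (f (τ (cl'' y)))) := by
    intro a y hab
    have h := sbDist hGd hM''S (x := g (τ a)) (x₀ := g (τ a)) (y := y) (y₀ := g (τ (cl'' y)))
      (by rw [dist_self]; exact Or.inl rfl) (hcl'' y).1
      (by rw [← hfg]; exact heLgt a (cl'' y) hab)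
    rwa [← hfg] at h
  have hvsb : ∀ (x : M') (b : L), cl' x ≠ b →
      SameBlock S (dist x (f (τ b))) (dist (f (τ (cl' x))) (f (τ b))) :=
    fun x b hab => sbDist hGd hM'S (hcl' x).1 (by rw [dist_self]; exact Or.inl rfl)
      (heLgt (cl' x) b hab)
  -- the master bundle of facts about E on unforced pairs
  have master : ∀ (x : M') (y : M''), (¬ ∃ m, f m = x) → (¬ ∃ m, g m = y) →
      E x y ∈ S ∧ s1 ≤ E x y ∧
      dist (g (τ (cl' x))) y ≤ E x y ∧ dist x (f (τ (cl'' y))) ≤ E x y ∧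
      E x y ≤ dist x (f (τ (cl' x))) + dist (g (τ (cl' x))) y ∧
      E x y ≤ dist y (g (τ (cl'' y))) + dist x (f (τ (cl'' y))) ∧
      (cl' x = cl'' y → E x y ≤ jone S s1) ∧
      (cl' x ≠ cl'' y → 2 * jone S s1 < E x y ∧
        SameBlock S (E x y) (dist (f (τ (cl' x))) (f (τ (cl'' y))))) := by
    intro x y hx hy
    obtain ⟨hαs1, hαj1⟩ := hxfacts x hx
    obtain ⟨hβs1, hβj1⟩ := hyfacts y hy
    have hu0 : dist (g (τ (cl' x))) y ≠ 0 := by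
      rw [dist_comm, dist_ne_zero]
      intro h
      exact hy ⟨τ (cl' x), h.symm⟩
    have hus1 : s1 ≤ dist (g (τ (cl' x))) y := hGd.hs1min _ (hM''S _ _) hu0
    have hv0 : dist x (f (τ (cl'' y))) ≠ 0 := by
      rw [dist_ne_zero]
      intro h
      exact hx ⟨τ (cl'' y), h.symm⟩
    have hvs1 : s1 ≤ dist x (f (τ (cl'' y))) := hGd.hs1min _ (hM'S _ _) hv0
    -- |u - v| ≤ s1
    have huv : |dist (g (τ (cl' x))) y - dist x (f (τ (cl'' y)))| ≤ s1 := by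
      by_cases hab : cl' x = cl'' y
      · have h1 : InLowBlock S s1 (dist (g (τ (cl' x))) y) := by
          rw [hab, dist_comm]; exact (hcl'' y).1
        have h2 : InLowBlock S s1 (dist x (f (τ (cl'' y)))) := by
          rw [← hab]; exact (hcl' x).1
        have hu1 := low_le_jone hGd h1
        have hv1 := low_le_jone hGd h2
        rw [abs_le]
        constructor <;> linarith
      · have h := sb_trans (husb (cl' x) y hab) (sb_symm (hvsb x (cl'' y) hab))
        exact hGd.sb_le h
    have hEq := hEe x y hx
    have hφ0 : 0 ≤ min (dist x (f (τ (cl' x))) + dist (g (τ (cl' x))) y)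
        (dist y (g (τ (cl'' y))) + dist x (f (τ (cl'' y)))) :=
      le_min (by positivity) (by positivity)
    obtain ⟨hfS, hfle⟩ := flS_spec hGd hφ0
    have habs := abs_le.1 huv
    have hDu : dist (g (τ (cl' x))) y ≤ E x y := by
      rw [hEq]
      refine flS_ge hGd hφ0 (hM''S _ _) (le_min (by linarith [dist_nonneg (x := x) (y := f (τ (cl' x)))]) (by linarith))
    have hDv : dist x (f (τ (cl'' y))) ≤ E x y := by
      rw [hEq]
      refine flS_ge hGd hφ0 (hM'S _ _) (le_min (by linarith) (by linarith [dist_nonneg (x := y) (y := g (τ (cl'' y)))]))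
    have hD1 : E x y ≤ dist x (f (τ (cl' x))) + dist (g (τ (cl' x))) y := by
      rw [hEq]; exact le_trans hfle (min_le_left _ _)
    have hD2 : E x y ≤ dist y (g (τ (cl'' y))) + dist x (f (τ (cl'' y))) := by
      rw [hEq]; exact le_trans hfle (min_le_right _ _)
    have hES : E x y ∈ S := by rw [hEq]; exact hfS
    have hEs1 : s1 ≤ E x y := le_trans hus1 hDu
    refine ⟨hES, hEs1, hDu, hDv, hD1, hD2, fun hab => ?_, fun hab => ?_⟩
    · -- low case
      have h1 : InLowBlock S s1 (dist (g (τ (cl' x))) y) := by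
        rw [hab, dist_comm]; exact (hcl'' y).1
      have hu1 := low_le_jone hGd h1
      have hElow : InLowBlock S s1 (E x y) := by
        refine lowOfLe hGd hES (by linarith)
      exact low_le_jone hGd hElow
    · -- same-block case
      have hugt' := hugt (cl' x) y hab
      have hEgt : 2 * jone S s1 < E x y := lt_of_lt_of_le hugt' hDu
      have hsbDu : SameBlock S (E x y) (dist (g (τ (cl' x))) y) := by
        by_contra hc
        have hn := hGd.notsb_gt hES (hM''S _ _)
          (by intro h; rw [h] at hEs1; linarith) hu0 hc
        rw [min_eq_right hDu, abs_of_nonneg (by linarith)] at hn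
        -- E - u ≤ α ≤ j1 < u : contradiction
        have : E x y - dist (g (τ (cl' x))) y ≤ jone S s1 := by linarith
        linarith
      exact ⟨hEgt, sb_trans hsbDu (husb (cl' x) y hab)⟩
  -- facts relating an unforced x with an image point f m
  have tfact : ∀ (x : M') (m : M), (¬ ∃ m', f m' = x) →
      s1 ≤ dist x (f m) ∧
      (cl' (f m) = cl' x → dist x (f m) ≤ jone S s1) ∧
      (cl' (f m) ≠ cl' x → 2 * jone S s1 < dist x (f m) ∧
        SameBlock S (dist x (f m)) (dist (f (τ (cl' x))) (f (τ (cl' (f m)))))) := by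
    intro x m hx
    have ht0 : dist x (f m) ≠ 0 := by
      rw [dist_ne_zero]
      intro h
      exact hx ⟨m, h.symm⟩
    refine ⟨hGd.hs1min _ (hM'S _ _) ht0, fun hca => ?_, fun hca => ⟨?_, ?_⟩⟩
    · have hlow : InLowBlock S s1 (dist x (f m)) := by
        have h2 : InLowBlock S s1 (dist (f m) (f (τ (cl' x)))) := by
          rw [← hca]; exact (hcl' (f m)).1
        exact rel_trans hGd hM'S (hcl' x).1 (rel_symm h2)
      exact low_le_jone hGd hlow
    · refine gt_of_notLow hGd (hM'S _ _) (fun hlow => hca ?_)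
      have h2 : InLowBlock S s1 (dist (f m) (f (τ (cl' x)))) :=
        rel_trans hGd hM'S (rel_symm hlow) (hcl' x).1
      exact ((hcl' (f m)).2 _ h2).symm
    · exact sbDist hGd hM'S (hcl' x).1 (hcl' (f m)).1 (heLgt _ _ (fun h => hca h.symm))
  have wfact : ∀ (y : M'') (m : M), (¬ ∃ m', g m' = y) →
      s1 ≤ dist (g m) y ∧
      (cl' (f m) = cl'' y → dist (g m) y ≤ jone S s1) ∧
      (cl' (f m) ≠ cl'' y → 2 * jone S s1 < dist (g m) y ∧
        SameBlock S (dist (g m) y) (dist (f (τ (cl' (f m)))) (f (τ (cl'' y))))) := by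
    intro y m hy
    have hw0 : dist (g m) y ≠ 0 := by
      rw [dist_comm, dist_ne_zero]
      intro h
      exact hy ⟨m, h.symm⟩
    refine ⟨hGd.hs1min _ (hM''S _ _) hw0, fun hcb => ?_, fun hcb => ⟨?_, ?_⟩⟩
    · have hlow : InLowBlock S s1 (dist (g m) y) := by
        have h2 : InLowBlock S s1 (dist (g m) (g (τ (cl'' y)))) := by
          have h3 := (hcl'' (g m)).1
          rw [hclfg m, hcb] at h3
          exact h3
        exact rel_trans hGd hM''S h2 (rel_symm (hcl'' y).1)
      exact low_le_jone hGd hlow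
    · refine gt_of_notLow hGd (hM''S _ _) (fun hlow => hcb ?_)
      have h2 : InLowBlock S s1 (dist (g m) (g (τ (cl'' y)))) :=
        rel_trans hGd hM''S hlow (hcl'' y).1
      rw [← hclfg m]
      exact ((hcl'' (g m)).2 _ h2).symm
    · have h := sbDist hGd hM''S (x := g m) (x₀ := g (τ (cl' (f m)))) (y := y)
        (y₀ := g (τ (cl'' y))) ?_ (hcl'' y).1 ?_
      · rwa [← hfg] at h
      · have := (hcl'' (g m)).1
        rwa [hclfg m] at this
      · rw [← hfg]
        exact heLgt _ _ hcb
  -- the three triangle inequalities between a cross pair and an image point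
  have hc2 : ∀ (x : M') (y : M'') (m : M), (¬ ∃ m', f m' = x) → (¬ ∃ m', g m' = y) →
      dist (g m) y ≤ dist x (f m) + E x y ∧
      E x y ≤ dist x (f m) + dist (g m) y ∧
      dist x (f m) ≤ E x y + dist (g m) y := by
    intro x y m hx hy
    obtain ⟨hES, hEs1, hDu, hDv, hD1, hD2, hlowE, hsbE⟩ := master x y hx hy
    obtain ⟨hαs1, hαj1⟩ := hxfacts x hx
    obtain ⟨hts1, htlow, htsb⟩ := tfact x m hx
    obtain ⟨hws1, hwlow, hwsb⟩ := wfact y m hy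
    by_cases hca : cl' (f m) = cl' x
    · by_cases hab : cl' x = cl'' y
      · -- all classes equal : everything small
        have ht := htlow hca
        have hw := hwlow (hca.trans hab)
        have hE := hlowE hab
        refine ⟨by linarith, by linarith, by linarith⟩
      · -- c = a ≠ b : w and E in the block of e(a,b)
        obtain ⟨hwgt, hwsb'⟩ := hwsb (fun h => hab (hca ▸ h : cl' x = cl'' y))
        have hwsb2 : SameBlock S (dist (g m) y) (dist (f (τ (cl' x))) (f (τ (cl'' y)))) := by
          rwa [hca] at hwsb'
        obtain ⟨hEgt, hEsb⟩ := hsbE hab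
        have h := hGd.sb_le (sb_trans hEsb (sb_symm hwsb2))
        have habs := abs_le.1 h
        have ht := htlow hca
        refine ⟨by linarith [habs.1], by linarith [habs.2], by linarith⟩
    · by_cases hcb : cl' (f m) = cl'' y
      · -- c = b ≠ a
        have hab : cl' x ≠ cl'' y := fun h => hca (hcb.trans h.symm)
        have hw := hwlow hcb
        obtain ⟨htgt, htsb'⟩ := htsb hca
        have htsb2 : SameBlock S (dist x (f m)) (dist (f (τ (cl' x))) (f (τ (cl'' y)))) := by
          rwa [hcb] at htsb'
        obtain ⟨hEgt, hEsb⟩ := hsbE hab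
        have h := hGd.sb_le (sb_trans hEsb (sb_symm htsb2))
        have habs := abs_le.1 h
        refine ⟨by linarith, by linarith [habs.1], by linarith [habs.2]⟩
      · by_cases hab : cl' x = cl'' y
        · -- a = b ≠ c : t and w in the same block, E small
          obtain ⟨htgt, htsb'⟩ := htsb hca
          obtain ⟨hwgt, hwsb'⟩ := hwsb hcb
          have hwsb2 : SameBlock S (dist (g m) y)
              (dist (f (τ (cl' x))) (f (τ (cl' (f m))))) := by
            rw [← hab] at hwsb'
            rwa [dist_comm (f (τ (cl' (f m)))) (f (τ (cl' x)))] at hwsb'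
          have habs := abs_le.1 (hGd.sb_le (sb_trans htsb' (sb_symm hwsb2)))
          have hE := hlowE hab
          refine ⟨by linarith [habs.2], by linarith, by linarith [habs.1]⟩
        · -- three distinct classes : Lemma Z three ways
          obtain ⟨htgt, htsb'⟩ := htsb hca
          obtain ⟨hwgt, hwsb'⟩ := hwsb hcb
          obtain ⟨hEgt, hEsb⟩ := hsbE hab
          have hegt : 2 * jone S s1 < dist (f (τ (cl' x))) (f (τ (cl'' y))) :=
        heLgt2 _ _ hab
          have hpgt : 2 * jone S s1 < dist (f (τ (cl' x))) (f (τ (cl' (f m)))) :=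
        heLgt2 _ _ (fun h => hca h.symm)
          have hqgt : 2 * jone S s1 < dist (f (τ (cl' (f m)))) (f (τ (cl'' y))) :=
        heLgt2 _ _ hcb
          have tri1 : dist (f (τ (cl' (f m)))) (f (τ (cl'' y))) ≤
              dist (f (τ (cl' x))) (f (τ (cl'' y))) +
              dist (f (τ (cl' x))) (f (τ (cl' (f m)))) := by
            have := dist_triangle (f (τ (cl' (f m)))) (f (τ (cl' x))) (f (τ (cl'' y)))
            rw [dist_comm (f (τ (cl' (f m)))) (f (τ (cl' x)))] at this
            linarith
          have tri2 : dist (f (τ (cl' x))) (f (τ (cl'' y))) ≤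
              dist (f (τ (cl' (f m)))) (f (τ (cl'' y))) +
              dist (f (τ (cl' x))) (f (τ (cl' (f m)))) := by
            have := dist_triangle (f (τ (cl' x))) (f (τ (cl' (f m)))) (f (τ (cl'' y)))
            linarith
          have tri3 : dist (f (τ (cl' x))) (f (τ (cl' (f m)))) ≤
              dist (f (τ (cl' x))) (f (τ (cl'' y))) +
              dist (f (τ (cl' (f m)))) (f (τ (cl'' y))) := by
            have := dist_triangle (f (τ (cl' x))) (f (τ (cl'' y))) (f (τ (cl' (f m))))
            rw [dist_comm (f (τ (cl'' y))) (f (τ (cl' (f m))))] at this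
            linarith
          have z1 := hGd.Z hEsb hwsb' htsb' hegt hqgt tri1 hEs1 hts1
          have z2 := hGd.Z hwsb' hEsb htsb' hqgt hegt tri2 hws1 hts1
          have z3 := hGd.Z hEsb htsb' hwsb' hegt hpgt tri3 hEs1 hws1
          refine ⟨by linarith, by linarith, by linarith⟩
  -- Lipschitz in the M' argument (both unforced)
  have hc3 : ∀ (x x' : M') (y : M''), (¬ ∃ m, f m = x) → (¬ ∃ m, f m = x') →
      (¬ ∃ m, g m = y) → E x y ≤ dist x x' + E x' y := by
    intro x x' y hx hx' hy
    rcases eq_or_ne x x' with rfl | hne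
    · simp [dist_self]
    obtain ⟨hES, hEs1, hDu, hDv, hD1, hD2, hlowE, hsbE⟩ := master x y hx hy
    obtain ⟨hES', hEs1', hDu', hDv', hD1', hD2', hlowE', hsbE'⟩ := master x' y hx' hy
    have hrs1 : s1 ≤ dist x x' := hGd.hs1min _ (hM'S _ _) (dist_ne_zero.2 hne)
    by_cases haa : cl' x = cl' x'
    · by_cases hab : cl' x = cl'' y
      · have h1 := hlowE hab
        have h2 := hEs1'
        linarith
      · obtain ⟨_, h1⟩ := hsbE hab
        obtain ⟨_, h2⟩ := hsbE' (haa ▸ hab)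
        have h2' : SameBlock S (E x' y) (dist (f (τ (cl' x))) (f (τ (cl'' y)))) := by
          rwa [← haa] at h2
        have habs := abs_le.1 (hGd.sb_le (sb_trans h1 (sb_symm h2')))
        linarith [habs.2]
    · -- different classes for x, x'
      have hrgt : 2 * jone S s1 < dist x x' := by
        refine gt_of_notLow hGd (hM'S _ _) (fun hlow => haa ?_)
        have h2 : InLowBlock S s1 (dist x (f (τ (cl' x')))) :=
          rel_trans hGd hM'S hlow (hcl' x').1
        exact ((hcl' x).2 _ h2).symm
      have hrsb : SameBlock S (dist x x') (dist (f (τ (cl' x))) (f (τ (cl' x')))) :=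
        sbDist hGd hM'S (hcl' x).1 (hcl' x').1 (heLgt _ _ haa)
      by_cases hab : cl' x = cl'' y
      · have h1 := hlowE hab
        linarith
      · by_cases hab' : cl' x' = cl'' y
        · obtain ⟨_, h1⟩ := hsbE hab
          have h1' : SameBlock S (E x y) (dist (f (τ (cl' x))) (f (τ (cl' x')))) := by
            rwa [← hab'] at h1
          have habs := abs_le.1 (hGd.sb_le (sb_trans h1' (sb_symm hrsb)))
          linarith [habs.2]
        · obtain ⟨_, h1⟩ := hsbE hab
          obtain ⟨_, h2⟩ := hsbE' hab'
          have tri : dist (f (τ (cl' x))) (f (τ (cl'' y))) ≤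
              dist (f (τ (cl' x'))) (f (τ (cl'' y))) +
              dist (f (τ (cl' x))) (f (τ (cl' x'))) := by
            have := dist_triangle (f (τ (cl' x))) (f (τ (cl' x'))) (f (τ (cl'' y)))
            linarith
          have z := hGd.Z h2 h1 hrsb (heLgt2 _ _ hab') (heLgt2 _ _ hab) tri hEs1' hrs1
          linarith
  -- Lipschitz in the M'' argument (x unforced, y, y' unforced)
  have hd2 : ∀ (x : M') (y y' : M''), (¬ ∃ m, f m = x) → (¬ ∃ m, g m = y) →
      (¬ ∃ m, g m = y') → E x y ≤ E x y' + dist y y' := by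
    intro x y y' hx hy hy'
    rcases eq_or_ne y y' with rfl | hne
    · simp [dist_self]
    obtain ⟨hES, hEs1, hDu, hDv, hD1, hD2, hlowE, hsbE⟩ := master x y hx hy
    obtain ⟨hES', hEs1', hDu', hDv', hD1', hD2', hlowE', hsbE'⟩ := master x y' hx hy'
    have hrs1 : s1 ≤ dist y y' := hGd.hs1min _ (hM''S _ _) (dist_ne_zero.2 hne)
    by_cases hbb : cl'' y = cl'' y'
    · by_cases hab : cl' x = cl'' y
      · have h1 := hlowE hab
        linarith
      · obtain ⟨_, h1⟩ := hsbE hab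
        obtain ⟨_, h2⟩ := hsbE' (hbb ▸ hab)
        have h2' : SameBlock S (E x y') (dist (f (τ (cl' x))) (f (τ (cl'' y)))) := by
          rwa [← hbb] at h2
        have habs := abs_le.1 (hGd.sb_le (sb_trans h1 (sb_symm h2')))
        linarith [habs.2]
    · have hrgt : 2 * jone S s1 < dist y y' := by
        refine gt_of_notLow hGd (hM''S _ _) (fun hlow => hbb ?_)
        have h2 : InLowBlock S s1 (dist y (g (τ (cl'' y')))) :=
          rel_trans hGd hM''S hlow (hcl'' y').1
        exact ((hcl'' y).2 _ h2).symm
      have hrsb : SameBlock S (dist y y') (dist (f (τ (cl'' y))) (f (τ (cl'' y')))) := by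
        have h := sbDist hGd hM''S (hcl'' y).1 (hcl'' y').1
          (by rw [← hfg]; exact heLgt _ _ hbb)
        rwa [← hfg] at h
      by_cases hab : cl' x = cl'' y
      · have h1 := hlowE hab
        linarith
      · by_cases hab' : cl' x = cl'' y'
        · obtain ⟨_, h1⟩ := hsbE hab
          have hrsb' : SameBlock S (dist y y') (dist (f (τ (cl' x))) (f (τ (cl'' y)))) := by
            rw [← hab'] at hrsb
            rwa [dist_comm (f (τ (cl'' y))) (f (τ (cl' x)))] at hrsb
          have habs := abs_le.1 (hGd.sb_le (sb_trans h1 (sb_symm hrsb')))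
          linarith [habs.2]
        · obtain ⟨_, h1⟩ := hsbE hab
          obtain ⟨_, h2⟩ := hsbE' hab'
          have tri : dist (f (τ (cl' x))) (f (τ (cl'' y))) ≤
              dist (f (τ (cl' x))) (f (τ (cl'' y'))) +
              dist (f (τ (cl'' y))) (f (τ (cl'' y'))) := by
            have := dist_triangle (f (τ (cl' x))) (f (τ (cl'' y'))) (f (τ (cl'' y)))
            rw [dist_comm (f (τ (cl'' y'))) (f (τ (cl'' y)))] at this
            linarith
          have z := hGd.Z h2 h1 hrsb (heLgt2 _ _ hab') (heLgt2 _ _ hab) tri hEs1' hrs1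
          linarith
  -- full versions covering forced points
  have TC1 : ∀ (x x' : M') (y : M''), (¬ ∃ m, g m = y) →
      E x y ≤ dist x x' + E x' y := by
    intro x x' y hy
    by_cases hx : ∃ m, f m = x
    · obtain ⟨m, rfl⟩ := hx
      by_cases hx' : ∃ m', f m' = x'
      · obtain ⟨m', rfl⟩ := hx'
        rw [hEf m y, hEf m' y]
        have h := dist_triangle (g m) (g m') y
        rw [← hfg m m'] at h
        linarith
      · rw [hEf m y]
        have h := (hc2 x' y m hx' hy).1
        rw [dist_comm x' (f m)] at h
        exact h
    · by_cases hx' : ∃ m', f m' = x'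
      · obtain ⟨m', rfl⟩ := hx'
        rw [hEf m' y]
        exact (hc2 x y m' hx hy).2.1
      · exact hc3 x x' y hx hx' hy
  have TCsum : ∀ (x x' : M') (y : M''), (¬ ∃ m, g m = y) →
      dist x x' ≤ E x y + E x' y := by
    intro x x' y hy
    by_cases hx : ∃ m, f m = x
    · obtain ⟨m, rfl⟩ := hx
      by_cases hx' : ∃ m', f m' = x'
      · obtain ⟨m', rfl⟩ := hx'
        rw [hEf m y, hEf m' y, hfg m m']
        have := dist_triangle (g m) y (g m')
        rw [dist_comm y (g m')] at this
        linarith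
      · rw [hEf m y]
        have h := (hc2 x' y m hx' hy).2.2
        rw [dist_comm (f m) x']
        linarith
    · by_cases hx' : ∃ m', f m' = x'
      · obtain ⟨m', rfl⟩ := hx'
        rw [hEf m' y]
        have h := (hc2 x y m' hx hy).2.2
        linarith
      · obtain ⟨_, _, _, hDv, _, _, _, _⟩ := master x y hx hy
        obtain ⟨_, _, _, hDv', _, _, _, _⟩ := master x' y hx' hy
        have htr := dist_triangle x (f (τ (cl'' y))) x'
        rw [dist_comm (f (τ (cl'' y))) x'] at htr
        linarith
  have TD1 : ∀ (x : M') (y y' : M''), (¬ ∃ m, g m = y) → (¬ ∃ m, g m = y') →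
      E x y ≤ E x y' + dist y y' := by
    intro x y y' hy hy'
    by_cases hx : ∃ m, f m = x
    · obtain ⟨m, rfl⟩ := hx
      rw [hEf m y, hEf m y']
      have := dist_triangle (g m) y' y
      rw [dist_comm y' y] at this
      linarith
    · exact hd2 x y y' hx hy hy'
  have TDsum : ∀ (x : M') (y y' : M''), (¬ ∃ m, g m = y) → (¬ ∃ m, g m = y') →
      dist y y' ≤ E x y + E x y' := by
    intro x y y' hy hy'
    by_cases hx : ∃ m, f m = x
    · obtain ⟨m, rfl⟩ := hx
      rw [hEf m y, hEf m y']
      have := dist_triangle y (g m) y'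
      rw [dist_comm y (g m)] at this
      linarith
    · obtain ⟨_, _, hDu, _, _, _, _, _⟩ := master x y hx hy
      obtain ⟨_, _, hDu', _, _, _, _, _⟩ := master x y' hx hy'
      have htr := dist_triangle y (g (τ (cl' x))) y'
      rw [dist_comm y (g (τ (cl' x)))] at htr
      linarith
  have hEpos : ∀ (x : M') (y : M''), (¬ ∃ m, g m = y) → 0 < E x y := by
    intro x y hy
    by_cases hx : ∃ m, f m = x
    · obtain ⟨m, rfl⟩ := hx
      rw [hEf m y]
      rw [dist_pos]
      intro h
      exact hy ⟨m, h⟩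
    · obtain ⟨_, h, _⟩ := master x y hx hy
      linarith
  have hEmem : ∀ (x : M') (y : M''), (¬ ∃ m, g m = y) → E x y ∈ S := by
    intro x y hy
    by_cases hx : ∃ m, f m = x
    · obtain ⟨m, rfl⟩ := hx
      rw [hEf m y]
      exact hM''S _ _
    · exact (master x y hx hy).1
  -- the amalgam
  haveI := hM'
  haveI := hM''
  let Y := {y : M'' // ¬ ∃ m : M, g m = y}
  let dN : (M' ⊕ Y) → (M' ⊕ Y) → ℝ := fun p q =>
    match p, q with
    | Sum.inl x, Sum.inl x' => dist x x'
    | Sum.inl x, Sum.inr y => E x y.1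
    | Sum.inr y, Sum.inl x => E x y.1
    | Sum.inr y, Sum.inr y' => dist y.1 y'.1
  let mN : MetricSpace (M' ⊕ Y) :=
  { dist := dN
    dist_self := by
      rintro (x | y)
      · exact dist_self x
      · exact dist_self y.1
    dist_comm := by
      rintro (x | y) (x' | y')
      · exact dist_comm x x'
      · rfl
      · rfl
      · exact dist_comm y.1 y'.1
    dist_triangle := by
      rintro (x | y) (x' | y') (x'' | y'')
      · exact dist_triangle x x' x''
      · -- l l r
        show E x y''.1 ≤ dist x x' + E x' y''.1
        exact TC1 x x' y''.1 y''.2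
      · -- l r l
        show dist x x'' ≤ E x y'.1 + E x'' y'.1
        exact TCsum x x'' y'.1 y'.2
      · -- l r r
        show E x y''.1 ≤ E x y'.1 + dist y'.1 y''.1
        have h := TD1 x y''.1 y'.1 y''.2 y'.2
        rwa [dist_comm y''.1 y'.1] at h
      · -- r l l
        show E x'' y.1 ≤ E x' y.1 + dist x' x''
        have h := TC1 x'' x' y.1 y.2
        rw [dist_comm x'' x'] at h
        linarith
      · -- r l r
        show dist y.1 y''.1 ≤ E x' y.1 + E x' y''.1
        exact TDsum x' y.1 y''.1 y.2 y''.2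
      · -- r r l
        show E x'' y.1 ≤ dist y.1 y'.1 + E x'' y'.1
        have h := TD1 x'' y.1 y'.1 y.2 y'.2
        linarith
      · exact dist_triangle y.1 y'.1 y''.1
    eq_of_dist_eq_zero := by
      rintro (x | y) (x' | y') h
      · exact congrArg Sum.inl (dist_eq_zero.1 h)
      · exact absurd h (ne_of_gt (hEpos x y'.1 y'.2))
      · exact absurd h (ne_of_gt (hEpos x' y.1 y.2))
      · exact congrArg Sum.inr (Subtype.ext (dist_eq_zero.1 h)) }
  refine ⟨M' ⊕ Y, mN, ?_, ?_, ?_, Sum.inl,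
    (fun y => if h : ∃ m, g m = y then Sum.inl (f h.choose) else Sum.inr ⟨y, h⟩),
    ?_, ?_, ?_⟩
  · infer_instance
  · rintro (x | y) (x' | y')
    · exact hM'S x x'
    · exact hEmem x y'.1 y'.2
    · exact hEmem x' y.1 y.2
    · exact hM''S y.1 y'.1
  · -- Spans
    refine ⟨fun a => Sum.inl (f (τ a)), Isometry.of_dist_eq fun a b => ?_, ?_⟩
    · exact (hf.comp hτ).dist_eq a b
    · rintro (x | y)
      · exact spanF x
      · obtain ⟨a, ha, hu⟩ := spanG y.1
        refine ⟨a, ?_, fun b hb => ?_⟩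
        · show InLowBlock S s1 (E (f (τ a)) y.1)
          rw [hEf (τ a) y.1, dist_comm]
          exact ha
        · refine hu b ?_
          have hb' : InLowBlock S s1 (E (f (τ b)) y.1) := hb
          rw [hEf (τ b) y.1, dist_comm] at hb'
          exact hb'
  · exact Isometry.of_dist_eq fun x x' => rfl
  · refine Isometry.of_dist_eq fun y y' => ?_
    by_cases hy : ∃ m, g m = y
    · rw [dif_pos hy]
      by_cases hy' : ∃ m, g m = y'
      · rw [dif_pos hy']
        show dist (f hy.choose) (f hy'.choose) = dist y y'
        rw [hfg, hy.choose_spec, hy'.choose_spec]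
      · rw [dif_neg hy']
        show E (f hy.choose) y' = dist y y'
        rw [hEf, hy.choose_spec]
    · rw [dif_neg hy]
      by_cases hy' : ∃ m, g m = y'
      · rw [dif_pos hy']
        show E (f hy'.choose) y = dist y y'
        rw [hEf, hy'.choose_spec, dist_comm]
      · rw [dif_neg hy']
        rfl
  · intro x
    dsimp only
    rw [dif_pos (⟨x, rfl⟩ : ∃ m, g m = g x)]
    have : (⟨x, rfl⟩ : ∃ m, g m = g x).choose = x :=
      hg.injective (⟨x, rfl⟩ : ∃ m, g m = g x).choose_spec
    rw [this]
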